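/- Let μ ≠ 0 and define I(a, w̃) = (μ²a²/2) w̃ᵀΩw̃ + μa² zᵀw̃ - (2aμ/σ_η²) zᵀΩ^{-1}Λw̃ + n(1-a)² + (a²/2) zᵀΩ^{-1}z. Then the stationary-point equations ∂I/∂a = 0, ∂I/∂w̃ = 0 are solved by a^opt = 1 - (nσ_η²)^{-1} zᵀΩ^{-1}ΛΩ^{-1}z and w̃^opt = (μΩ)^{-1}{ 2ΛΩ^{-1}z/(a^opt σ_η²) - z }, provided a^opt ≠ 0. -/

import Mathlib

open Matrix

/-- The AR(1) precision tridiagonal matrix. -/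
noncomputable def ar1Lambda (n : ℕ) (φ : ℝ) : Matrix (Fin n) (Fin n) ℝ :=
  Matrix.of fun i j =>
    if i = j then (if i.val = 0 ∨ i.val = n - 1 then (1 : ℝ) else 1 + φ ^ 2)
    else if i.val + 1 = j.val ∨ j.val + 1 = i.val then -φ else 0

noncomputable def dotc (n : ℕ) (c : Fin n → ℝ) : (ℝ × (Fin n → ℝ)) →L[ℝ] ℝ :=
  LinearMap.toContinuousLinearMap
  { toFun := fun q => c ⬝ᵥ q.2
    map_add' := by intro x y; simp [dotProduct_add]
    map_smul' := by intro m x; simp [dotProduct_smul] }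

@[simp] lemma dotc_apply (n : ℕ) (c : Fin n → ℝ) (q : ℝ × (Fin n → ℝ)) :
    dotc n c q = c ⬝ᵥ q.2 := rfl

lemma omega_det_ne_zero (n : ℕ) (φ : ℝ) (hφ : |φ| < 1) (σε ση : ℝ)
    (hσε : 0 < σε) (hση : 0 < ση) :
    ((σε ^ 2)⁻¹ • (1 : Matrix (Fin n) (Fin n) ℝ) + (ση ^ 2)⁻¹ • ar1Lambda n φ).det ≠ 0 := by
  set c1 := (σε ^ 2)⁻¹ with hc1
  set c2 := (ση ^ 2)⁻¹ with hc2
  have hc1p : 0 < c1 := by positivity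
  have hc2p : 0 < c2 := by positivity
  apply det_ne_zero_of_sum_row_lt_diag
  intro k
  set Ω := c1 • (1 : Matrix (Fin n) (Fin n) ℝ) + c2 • ar1Lambda n φ with hΩ
  have hφ0 : 0 ≤ |φ| := abs_nonneg φ
  -- off-diagonal entries
  have hoff : ∀ j, j ≠ k → ‖Ω k j‖ =
      (if k.val + 1 = j.val ∨ j.val + 1 = k.val then c2 * |φ| else 0) := by
    intro j hj
    have : Ω k j = c2 * (if k.val + 1 = j.val ∨ j.val + 1 = k.val then -φ else 0) := by
      simp [hΩ, Matrix.one_apply, (Ne.symm hj : k ≠ j), ar1Lambda]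
    rw [this]
    split_ifs <;> simp [abs_mul, abs_of_pos hc2p]
  -- indicator sums
  have hs1 : (∑ j : Fin n, (if j.val + 1 = k.val then (1:ℝ) else 0)) ≤ 1 := by
    rw [Finset.sum_boole]
    norm_cast
    apply Finset.card_le_one.mpr
    intro a ha b hb
    simp only [Finset.mem_filter] at ha hb
    exact Fin.ext (by omega)
  have hs2 : (∑ j : Fin n, (if k.val + 1 = j.val then (1:ℝ) else 0)) ≤ 1 := by
    rw [Finset.sum_boole]
    norm_cast
    apply Finset.card_le_one.mpr
    intro a ha b hb
    simp only [Finset.mem_filter] at ha hb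
    exact Fin.ext (by omega)
  have hs1z : k.val = 0 → (∑ j : Fin n, (if j.val + 1 = k.val then (1:ℝ) else 0)) = 0 := by
    intro h; apply Finset.sum_eq_zero; intro j _; simp [h]
  have hs2z : k.val = n - 1 → (∑ j : Fin n, (if k.val + 1 = j.val then (1:ℝ) else 0)) = 0 := by
    intro h; apply Finset.sum_eq_zero; intro j _
    have := j.isLt; have := k.isLt
    rw [if_neg]; omega
  -- bound the sum
  have hbound : ∑ j ∈ Finset.univ.erase k, ‖Ω k j‖ ≤
      c2 * |φ| * ((∑ j : Fin n, (if j.val + 1 = k.val then (1:ℝ) else 0))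
        + (∑ j : Fin n, (if k.val + 1 = j.val then (1:ℝ) else 0))) := by
    have : ∀ j ∈ Finset.univ.erase k, ‖Ω k j‖ ≤
        c2 * |φ| * ((if j.val + 1 = k.val then (1:ℝ) else 0)
          + (if k.val + 1 = j.val then (1:ℝ) else 0)) := by
      intro j hj
      rw [hoff j (Finset.ne_of_mem_erase hj)]
      split_ifs with h h1 h2 h1 h2 <;> [skip; skip; skip; omega; skip; skip; skip; skip] <;>
        nlinarith [mul_nonneg (le_of_lt hc2p) hφ0]
    calc ∑ j ∈ Finset.univ.erase k, ‖Ω k j‖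
        ≤ ∑ j ∈ Finset.univ.erase k, c2 * |φ| * ((if j.val + 1 = k.val then (1:ℝ) else 0)
          + (if k.val + 1 = j.val then (1:ℝ) else 0)) := Finset.sum_le_sum this
      _ ≤ ∑ j : Fin n, c2 * |φ| * ((if j.val + 1 = k.val then (1:ℝ) else 0)
          + (if k.val + 1 = j.val then (1:ℝ) else 0)) := by
            apply Finset.sum_le_sum_of_subset_of_nonneg (Finset.erase_subset _ _)
            intro j _ _
            positivity
      _ = _ := by rw [← Finset.mul_sum, Finset.sum_add_distrib]
  -- diagonal entry
  have hdiag : Ω k k = c1 + c2 * (if k.val = 0 ∨ k.val = n - 1 then 1 else 1 + φ ^ 2) := by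
    simp [hΩ, Matrix.one_apply, ar1Lambda]
  have hφ2 : |φ| * |φ| = φ ^ 2 := by rw [← abs_mul, ← sq, abs_sq]
  by_cases hk : k.val = 0 ∨ k.val = n - 1
  · have h1 : ∑ j ∈ Finset.univ.erase k, ‖Ω k j‖ ≤ c2 * |φ| := by
      rcases hk with h | h
      · calc _ ≤ _ := hbound
          _ ≤ c2 * |φ| * (0 + 1) := by
              apply mul_le_mul_of_nonneg_left _ (by positivity)
              rw [hs1z h]; linarith
          _ = c2 * |φ| := by ring
      · calc _ ≤ _ := hbound
          _ ≤ c2 * |φ| * (1 + 0) := by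
              apply mul_le_mul_of_nonneg_left _ (by positivity)
              rw [hs2z h]; linarith
          _ = c2 * |φ| := by ring
    have hdd : ‖Ω k k‖ = c1 + c2 := by
      rw [hdiag, if_pos hk, mul_one, Real.norm_eq_abs, abs_of_pos (by linarith)]
    rw [hdd]
    nlinarith
  · have h1 : ∑ j ∈ Finset.univ.erase k, ‖Ω k j‖ ≤ c2 * |φ| * 2 := by
      calc _ ≤ _ := hbound
        _ ≤ c2 * |φ| * 2 := by
            apply mul_le_mul_of_nonneg_left _ (by positivity)
            linarith
    have hdd : ‖Ω k k‖ = c1 + c2 * (1 + φ ^ 2) := by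
      rw [hdiag, if_neg hk, Real.norm_eq_abs, abs_of_pos (by nlinarith)]
    rw [hdd]
    nlinarith [sq_nonneg (1 - |φ|), mul_pos hc2p (by nlinarith : (0:ℝ) < (1 - |φ|)^2)]



set_option maxHeartbeats 2000000 in
/-- for `μ ≠ 0`, the augmented information
`I(a, w̃) = (μ²a²/2) w̃ᵀΩw̃ + μa² zᵀw̃ - (2aμ/σ_η²) zᵀΩ⁻¹Λw̃ + n(1-a)² + (a²/2) zᵀΩ⁻¹z`
has a stationary point (total derivative zero, i.e. `∂I/∂a = 0` and `∂I/∂w̃ = 0`)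
at `a^opt = 1 - (nσ_η²)⁻¹ zᵀΩ⁻¹ΛΩ⁻¹z`,
`w̃^opt = (μΩ)⁻¹ (2ΛΩ⁻¹z/(a^opt σ_η²) - z)`, provided `a^opt ≠ 0`. -/
theorem stmt_16 (n : ℕ) (hn : 1 ≤ n) (φ : ℝ) (hφ : |φ| < 1)
    (σε ση μ : ℝ) (hσε : 0 < σε) (hση : 0 < ση) (hμ : μ ≠ 0)
    (z : Fin n → ℝ)
    (Λ : Matrix (Fin n) (Fin n) ℝ) (hΛ : Λ = ar1Lambda n φ)
    (Ω : Matrix (Fin n) (Fin n) ℝ)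
    (hΩ : Ω = (σε ^ 2)⁻¹ • (1 : Matrix (Fin n) (Fin n) ℝ) + (ση ^ 2)⁻¹ • Λ)
    (Ifun : ℝ × (Fin n → ℝ) → ℝ)
    (hI : ∀ a wt, Ifun (a, wt) = μ ^ 2 * a ^ 2 / 2 * (wt ⬝ᵥ (Ω *ᵥ wt))
        + μ * a ^ 2 * (z ⬝ᵥ wt) - 2 * a * μ / ση ^ 2 * (z ⬝ᵥ (Ω⁻¹ *ᵥ (Λ *ᵥ wt)))
        + n * (1 - a) ^ 2 + a ^ 2 / 2 * (z ⬝ᵥ (Ω⁻¹ *ᵥ z)))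
    (aopt : ℝ)
    (haopt : aopt = 1 - (n * ση ^ 2)⁻¹ * (z ⬝ᵥ (Ω⁻¹ *ᵥ (Λ *ᵥ (Ω⁻¹ *ᵥ z)))))
    (ha0 : aopt ≠ 0)
    (wtopt : Fin n → ℝ)
    (hwtopt : wtopt = (μ • Ω)⁻¹ *ᵥ
        ((2 / (aopt * ση ^ 2)) • (Λ *ᵥ (Ω⁻¹ *ᵥ z)) - z)) :
    fderiv ℝ Ifun (aopt, wtopt) = 0 := by
  have hΛsymm : Λᵀ = Λ := by
    subst hΛ
    ext i j
    by_cases h : i = j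
    · simp [h]
    · simp [ar1Lambda, transpose_apply, h, Ne.symm h, or_comm]
  have hdet : Ω.det ≠ 0 := by
    rw [hΩ, hΛ]
    exact omega_det_ne_zero n φ hφ σε ση hσε hση
  have hunit : IsUnit Ω.det := isUnit_iff_ne_zero.mpr hdet
  have hΩΩ : Ω * Ω⁻¹ = 1 := mul_nonsing_inv _ hunit
  have hΩsymm : Ωᵀ = Ω := by
    rw [hΩ]; simp [transpose_add, transpose_smul, hΛsymm]
  have hIsymm : (Ω⁻¹)ᵀ = Ω⁻¹ := by rw [transpose_nonsing_inv, hΩsymm]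
  have sdot : ∀ (M : Matrix (Fin n) (Fin n) ℝ), Mᵀ = M →
      ∀ x y : Fin n → ℝ, x ⬝ᵥ (M *ᵥ y) = y ⬝ᵥ (M *ᵥ x) := by
    intro M hM x y
    rw [dotProduct_mulVec]
    conv_lhs => rw [← hM]
    rw [vecMul_transpose, dotProduct_comm]
  set L : Fin n → ℝ := Λ *ᵥ (Ω⁻¹ *ᵥ z) with hLdef
  have hdotL : ∀ w' : Fin n → ℝ, z ⬝ᵥ (Ω⁻¹ *ᵥ (Λ *ᵥ w')) = L ⬝ᵥ w' := by
    intro w'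
    rw [sdot _ hIsymm z (Λ *ᵥ w'), dotProduct_comm, sdot _ hΛsymm _ w', dotProduct_comm]
  -- inverse of μ • Ω
  have hsmulinv : (μ • Ω)⁻¹ = μ⁻¹ • Ω⁻¹ := by
    apply inv_eq_right_inv
    rw [smul_mul_smul_comm, hΩΩ, mul_inv_cancel₀ hμ, one_smul]
  set cc : ℝ := 2 / (aopt * ση ^ 2) with hcc
  have key2 : wtopt = μ⁻¹ • (Ω⁻¹ *ᵥ (cc • L - z)) := by
    rw [hwtopt, hsmulinv, smul_mulVec]
  have key1 : Ω *ᵥ wtopt = μ⁻¹ • (cc • L - z) := by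
    rw [key2, mulVec_smul, mulVec_mulVec, hΩΩ, one_mulVec]
  -- the derivative
  set P : ℝ × (Fin n → ℝ) := (aopt, wtopt) with hP
  have h_a : HasFDerivAt (fun q : ℝ × (Fin n → ℝ) => q.1)
      (ContinuousLinearMap.fst ℝ ℝ (Fin n → ℝ)) P := hasFDerivAt_fst
  have hproj : ∀ i : Fin n, HasFDerivAt (fun q : ℝ × (Fin n → ℝ) => q.2 i)
      ((ContinuousLinearMap.proj i).comp (ContinuousLinearMap.snd ℝ ℝ (Fin n → ℝ))) P :=
    fun i => ((ContinuousLinearMap.proj i).comp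
      (ContinuousLinearMap.snd ℝ ℝ (Fin n → ℝ))).hasFDerivAt
  have hdot : ∀ c : Fin n → ℝ, HasFDerivAt (fun q : ℝ × (Fin n → ℝ) => c ⬝ᵥ q.2)
      (dotc n c) P := fun c => (dotc n c).hasFDerivAt
  have hq : HasFDerivAt (fun q : ℝ × (Fin n → ℝ) => q.2 ⬝ᵥ (Ω *ᵥ q.2))
      (∑ i : Fin n, (wtopt i • dotc n (Ω i) + (Ω i ⬝ᵥ wtopt) •
        ((ContinuousLinearMap.proj i).comp (ContinuousLinearMap.snd ℝ ℝ (Fin n → ℝ))))) P :=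
    HasFDerivAt.fun_sum fun i _ => ((hproj i).mul (hdot (Ω i)))
  have hsq := h_a.mul h_a
  have h1 := (hsq.const_mul (μ ^ 2 / 2)).mul hq
  have h2 := (hsq.const_mul μ).mul (hdot z)
  have h3 := (h_a.const_mul (2 * μ / ση ^ 2)).mul (hdot L)
  have h4 := ((h_a.const_sub 1).mul (h_a.const_sub 1)).const_mul (n : ℝ)
  have h5 := hsq.const_mul ((z ⬝ᵥ (Ω⁻¹ *ᵥ z)) / 2)
  have hT := (((h1.add h2).sub h3).add h4).add h5
  have hIfun : Ifun = fun q : ℝ × (Fin n → ℝ) =>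
      μ ^ 2 / 2 * (q.1 * q.1) * (q.2 ⬝ᵥ (Ω *ᵥ q.2)) + μ * (q.1 * q.1) * (z ⬝ᵥ q.2)
        - 2 * μ / ση ^ 2 * q.1 * (L ⬝ᵥ q.2) + n * ((1 - q.1) * (1 - q.1))
        + (z ⬝ᵥ (Ω⁻¹ *ᵥ z)) / 2 * (q.1 * q.1) := by
    funext q
    obtain ⟨a, w⟩ := q
    rw [hI a w, hdotL w]
    ring
  rw [hIfun]
  refine HasFDerivAt.fderiv (HasFDerivAt.congr_fderiv hT ?_)
  apply ContinuousLinearMap.ext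
  rintro ⟨s, v⟩
  simp only [ContinuousLinearMap.add_apply, ContinuousLinearMap.coe_sub',
    Pi.sub_apply, ContinuousLinearMap.coe_smul', Pi.smul_apply,
    ContinuousLinearMap.sum_apply, ContinuousLinearMap.coe_comp',
    Function.comp_apply, ContinuousLinearMap.coe_fst',
    ContinuousLinearMap.proj_apply, ContinuousLinearMap.coe_snd',
    dotc_apply, smul_eq_mul, ContinuousLinearMap.zero_apply,
    ContinuousLinearMap.neg_apply]
  have hnpos : (0:ℝ) < n := by exact_mod_cast hn
  have hsum : ∑ x : Fin n, (wtopt x * (Ω x ⬝ᵥ v) + (Ω x ⬝ᵥ wtopt) * v x)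
      = wtopt ⬝ᵥ (Ω *ᵥ v) + (Ω *ᵥ wtopt) ⬝ᵥ v := by
    rw [Finset.sum_add_distrib]; rfl
  rw [hsum, sdot Ω hΩsymm wtopt v, key1]
  simp only [hP, Pi.mul_apply]
  rw [key2]
  simp only [smul_dotProduct, dotProduct_smul, sub_dotProduct, dotProduct_sub,
    add_dotProduct, dotProduct_add, mulVec_smul, mulVec_sub, smul_eq_mul]
  rw [dotProduct_comm (Ω⁻¹ *ᵥ L) L, dotProduct_comm (Ω⁻¹ *ᵥ L) z,
    dotProduct_comm (Ω⁻¹ *ᵥ z) L, dotProduct_comm (Ω⁻¹ *ᵥ z) z,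
    sdot _ hIsymm L z, dotProduct_comm v L, dotProduct_comm v z]
  have hR : z ⬝ᵥ (Ω⁻¹ *ᵥ L) = (1 - aopt) * (n * ση ^ 2) := by
    rw [haopt]; field_simp; ring
  rw [hcc, hR]
  have hσsay : (ση:ℝ) ≠ 0 := ne_of_gt hση
  field_simp
  ring
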